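/- Every finitely generated Abelian group is equationally Artinian. -/
import Mathlib


/-- The Diophantine radical `Rad_H(E)` of a subset `E ⊆ Hⁿ` (coefficients from `H` itself). -/
def RadH (H : Type*) [Group H] {n : ℕ} (E : Set (Fin n → H)) :
    Set (Monoid.Coprod H (FreeGroup (Fin n))) :=
  {w | ∀ e ∈ E, Monoid.Coprod.lift (MonoidHom.id H) (FreeGroup.lift e) w = 1}

/-- A group is equationally Artinian (Diophantine sense). -/
def EquationallyArtinian (H : Type*) [Group H] : Prop :=
  ∀ (n : ℕ) (E : Set (Fin n → H)), ∃ E₀ ⊆ E, E₀.Finite ∧ RadH H E₀ = RadH H E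

/-- The "difference" homomorphism: trivial on coefficients, `FreeGroup.lift v` on variables. -/
def dMap {G : Type*} [CommGroup G] {n : ℕ} (v : Fin n → G) :
    Monoid.Coprod G (FreeGroup (Fin n)) →* G :=
  Monoid.Coprod.lift 1 (FreeGroup.lift v)

lemma dMap_mul {G : Type*} [CommGroup G] {n : ℕ} (v v' : Fin n → G) :
    dMap (v * v') = dMap v * dMap v' := by
  apply Monoid.Coprod.hom_ext
  · ext x
    simp [dMap]
  · ext i
    simp [dMap]

lemma phi_eq_phi_mul_dMap {G : Type*} [CommGroup G] {n : ℕ} (e e₀ : Fin n → G) :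
    Monoid.Coprod.lift (MonoidHom.id G) (FreeGroup.lift e)
      = Monoid.Coprod.lift (MonoidHom.id G) (FreeGroup.lift e₀) * dMap (e / e₀) := by
  apply Monoid.Coprod.hom_ext
  · ext x
    simp [dMap]
  · ext i
    simp [dMap]

lemma exists_finite_subset_span_eq {R M : Type*} [Ring R] [AddCommGroup M] [Module R M]
    [IsNoetherian R M] (S : Set M) :
    ∃ T : Finset M, ↑T ⊆ S ∧ Submodule.span R (↑T : Set M) = Submodule.span R S := by
  classical
  obtain ⟨G, hG⟩ := IsNoetherian.noetherian (Submodule.span R S)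
  choose T hT1 hT2 using fun g : G => Submodule.mem_span_finite_of_mem_span
    (show (g : M) ∈ Submodule.span R S from hG ▸ Submodule.subset_span g.2)
  have hsub : ↑(G.attach.biUnion T) ⊆ S := by
    intro x hx
    simp only [Finset.coe_biUnion, Set.mem_iUnion, Finset.mem_coe] at hx
    obtain ⟨g, _, hx⟩ := hx
    exact hT1 g hx
  refine ⟨G.attach.biUnion T, hsub, le_antisymm (Submodule.span_le.mpr
    (hsub.trans Submodule.subset_span)) ?_⟩
  rw [← hG, Submodule.span_le]
  intro g hg
  refine Submodule.span_mono ?_ (hT2 ⟨g, hg⟩)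
  intro x hx
  simp only [Finset.coe_biUnion, Set.mem_iUnion, Finset.mem_coe]
  exact ⟨⟨g, hg⟩, Finset.mem_attach _ _, hx⟩

/-- Every finitely generated Abelian group is equationally Artinian. -/
theorem fgAbelian_equationallyArtinian {H : Type*} [AddCommGroup H] (hfg : AddGroup.FG H) :
    EquationallyArtinian (Multiplicative H) := by
  haveI : Module.Finite ℤ H := Module.Finite.iff_addGroup_fg.mpr hfg
  intro n E
  rcases E.eq_empty_or_nonempty with rfl | ⟨e₀, he₀⟩
  · exact ⟨∅, subset_rfl, Set.finite_empty, rfl⟩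
  classical
  set f : (Fin n → Multiplicative H) → (Fin n → H) :=
    fun e => fun i => Multiplicative.toAdd (e i / e₀ i) with hf
  obtain ⟨T, hTS, hTspan⟩ := exists_finite_subset_span_eq (R := ℤ) (f '' E)
  obtain ⟨E₁, hE₁E, hE₁fin, hE₁span⟩ := (Set.exists_subset_image_finite_and (p := fun t => Submodule.span ℤ t = Submodule.span ℤ (f '' E))).mp
    ⟨↑T, hTS, T.finite_toSet, hTspan⟩
  have hsub : insert e₀ E₁ ⊆ E := Set.insert_subset he₀ hE₁E
  refine ⟨insert e₀ E₁, hsub, hE₁fin.insert e₀, ?_⟩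
  ext w
  simp only [RadH, Set.mem_setOf_eq]
  constructor
  · intro hw e he
    have h0 : Monoid.Coprod.lift (MonoidHom.id (Multiplicative H)) (FreeGroup.lift e₀) w = 1 :=
      hw e₀ (Set.mem_insert _ _)
    -- the evaluation of `w` as an additive homomorphism in the variable tuple
    let L0 : (Fin n → H) →+ H := AddMonoidHom.mk'
      (fun v => Multiplicative.toAdd (dMap (fun i => Multiplicative.ofAdd (v i)) w))
      (by
        intro a b
        have h : (fun i => Multiplicative.ofAdd ((a + b) i))
            = (fun i => Multiplicative.ofAdd (a i)) * (fun i => Multiplicative.ofAdd (b i)) := rfl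
        show Multiplicative.toAdd ((dMap fun i => Multiplicative.ofAdd ((a + b) i)) w)
            = Multiplicative.toAdd ((dMap fun i => Multiplicative.ofAdd (a i)) w)
              + Multiplicative.toAdd ((dMap fun i => Multiplicative.ofAdd (b i)) w)
        rw [h, dMap_mul]
        rfl)
    let L : (Fin n → H) →ₗ[ℤ] H := L0.toIntLinearMap
    have hker : Submodule.span ℤ (f '' E₁) ≤ LinearMap.ker L := by
      rw [Submodule.span_le]
      rintro _ ⟨e', he', rfl⟩
      have h1 : Monoid.Coprod.lift (MonoidHom.id (Multiplicative H)) (FreeGroup.lift e') w = 1 :=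
        hw e' (Set.mem_insert_of_mem _ he')
      have hid : (fun i => Multiplicative.ofAdd (f e' i)) = e' / e₀ := rfl
      have hphi := congrArg (fun g : Monoid.Coprod (Multiplicative H) (FreeGroup (Fin n))
          →* Multiplicative H => g w) (phi_eq_phi_mul_dMap e' e₀)
      simp only [MonoidHom.mul_apply] at hphi
      rw [h1, h0, one_mul] at hphi
      show L0 (f e') = 0
      show Multiplicative.toAdd (dMap (fun i => Multiplicative.ofAdd (f e' i)) w) = 0
      rw [hid, ← hphi]
      rfl
    have hmem : f e ∈ Submodule.span ℤ (f '' E₁) := by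
      rw [hE₁span]
      exact Submodule.subset_span ⟨e, he, rfl⟩
    have hLe : L (f e) = 0 := hker hmem
    have hd : dMap (e / e₀) w = 1 := by
      have hid : (fun i => Multiplicative.ofAdd (f e i)) = e / e₀ := rfl
      have : Multiplicative.toAdd (dMap (fun i => Multiplicative.ofAdd (f e i)) w) = 0 := hLe
      rw [hid] at this
      exact this
    have hphi := congrArg (fun g : Monoid.Coprod (Multiplicative H) (FreeGroup (Fin n))
        →* Multiplicative H => g w) (phi_eq_phi_mul_dMap e e₀)
    simp only [MonoidHom.mul_apply] at hphi
    rw [h0, hd, one_mul] at hphi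
    exact hphi
  · intro hw e he
    exact hw e (hsub he)
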